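/- Let a, b ≥ 0 and let R₀* = {y : a·∑_{m=1}^M W(y|x_m) + max_m W(y|x_m) ≤ b·Q₀(y)}, with R_m* = (R₀*)^c ∩ {y : W(y|x_m) > max_{k≠m} W(y|x_k)} (ties broken arbitrarily). If another partition (R₀, R₁, …, R_M) of 𝒴ⁿ satisfies Q₀(R₀^c) ≤ Q₀((R₀*)^c) and (1/M)∑_m W(R₀|x_m) ≤ (1/M)∑_m W(R₀*|x_m), then (1/M)∑_m W((R_m*)^c|x_m) ≤ (1/M)∑_m W(R_m^c|x_m). -/

import Mathlib

/-- Optimality (Neyman–Pearson style) of the detector/decoder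
`R₀* = {y : a·∑_m W(y|x_m) + max_m W(y|x_m) ≤ b·Q₀(y)}` with ML decoding regions
(ties broken arbitrarily).  If another partition `(R₀,…,R_M)` has FA probability and
MD probability no larger than those of the starred partition, then the starred
partition has no larger decoding-error probability. -/
theorem stmt0 {Y : Type*} [Fintype Y] [DecidableEq Y]
    (M : ℕ) [NeZero M]
    (W : Fin M → Y → ℝ) (Q0 : Y → ℝ)
    (hW : ∀ m y, 0 ≤ W m y) (hWsum : ∀ m, ∑ y, W m y = 1)
    (hQ0 : ∀ y, 0 ≤ Q0 y) (hQ0sum : ∑ y, Q0 y = 1)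
    (a b : ℝ) (ha : 0 ≤ a) (hb : 0 ≤ b)
    (Rstar R : Option (Fin M) → Finset Y)
    (hRstarPart : ∀ y : Y, ∃! i, y ∈ Rstar i)
    (hRPart : ∀ y : Y, ∃! i, y ∈ R i)
    (hRstar0 : ∀ y : Y, y ∈ Rstar none ↔
      a * ∑ m, W m y + Finset.univ.sup' Finset.univ_nonempty (fun m => W m y) ≤ b * Q0 y)
    (hRstarML : ∀ (m : Fin M) (y : Y), y ∈ Rstar (some m) → ∀ k, W k y ≤ W m y)
    (hFA : ∑ y ∈ (R none)ᶜ, Q0 y ≤ ∑ y ∈ (Rstar none)ᶜ, Q0 y)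
    (hMD : (1 / M : ℝ) * ∑ m, ∑ y ∈ R none, W m y ≤
           (1 / M : ℝ) * ∑ m, ∑ y ∈ Rstar none, W m y) :
    (1 / M : ℝ) * ∑ m, ∑ y ∈ (Rstar (some m))ᶜ, W m y ≤
      (1 / M : ℝ) * ∑ m, ∑ y ∈ (R (some m))ᶜ, W m y := by
  have hMpos : (0:ℝ) < (M:ℝ) := by
    exact_mod_cast Nat.pos_of_ne_zero (NeZero.ne M)
  set V : Y → ℝ := fun y => Finset.univ.sup' Finset.univ_nonempty (fun m => W m y) with hVdef
  have hWleV : ∀ (m : Fin M) y, W m y ≤ V y := fun m y =>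
    Finset.le_sup' (fun m => W m y) (Finset.mem_univ m)
  have hne : Nonempty (Fin M) := ⟨⟨0, Nat.pos_of_ne_zero (NeZero.ne M)⟩⟩
  have hVnn : ∀ y, 0 ≤ V y := fun y =>
    le_trans (hW (Classical.arbitrary (Fin M)) y) (hWleV _ y)
  -- rewrite a double sum over decoding regions as a single sum of indicators
  have hrw : ∀ (P : Option (Fin M) → Finset Y),
      ∑ m, ∑ y ∈ P (some m), W m y
        = ∑ y, ∑ m, if y ∈ P (some m) then W m y else 0 := by
    intro P
    rw [Finset.sum_comm]
    refine Finset.sum_congr rfl (fun m _ => ?_)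
    rw [Finset.sum_ite_mem, Finset.univ_inter]
  -- upper bound for an arbitrary partition
  have key : ∀ (P : Option (Fin M) → Finset Y), (∀ y, ∃! i, y ∈ P i) →
      ∑ m, ∑ y ∈ P (some m), W m y ≤ ∑ y ∈ (P none)ᶜ, V y := by
    intro P hP
    rw [hrw P]
    have : ∑ y ∈ (P none)ᶜ, V y = ∑ y, if y ∈ (P none)ᶜ then V y else 0 := by
      rw [Finset.sum_ite_mem, Finset.univ_inter]
    rw [this]
    refine Finset.sum_le_sum (fun y _ => ?_)
    obtain ⟨i, hi, hiu⟩ := hP y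
    match i with
    | none =>
      have h0 : ∀ m : Fin M, y ∉ P (some m) := by
        intro m hm
        exact Option.some_ne_none m (hiu (some m) hm)
      have h1 : y ∉ (P none)ᶜ := by simpa using hi
      simp [h0, h1]
    | some m0 =>
      have h0 : ∀ m : Fin M, m ≠ m0 → y ∉ P (some m) := by
        intro m hm hmem
        exact hm (Option.some_injective _ (hiu (some m) hmem))
      have h1 : y ∈ (P none)ᶜ := by
        simp only [Finset.mem_compl]
        intro hmem
        exact Option.some_ne_none m0 (hiu none hmem).symm
      have hsum : (∑ m, if y ∈ P (some m) then W m y else 0) = W m0 y := by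
        rw [Finset.sum_eq_single m0]
        · simp [hi]
        · intro m _ hm; simp [h0 m hm]
        · intro h; exact absurd (Finset.mem_univ m0) h
      rw [hsum]
      simp only [h1, if_true]
      exact hWleV m0 y
  -- lower bound for the starred partition (ML regions achieve the max)
  have keyStar : ∑ y ∈ (Rstar none)ᶜ, V y ≤ ∑ m, ∑ y ∈ Rstar (some m), W m y := by
    rw [hrw Rstar]
    have : ∑ y ∈ (Rstar none)ᶜ, V y = ∑ y, if y ∈ (Rstar none)ᶜ then V y else 0 := by
      rw [Finset.sum_ite_mem, Finset.univ_inter]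
    rw [this]
    refine Finset.sum_le_sum (fun y _ => ?_)
    obtain ⟨i, hi, hiu⟩ := hRstarPart y
    match i with
    | none =>
      have h1 : y ∉ (Rstar none)ᶜ := by simpa using hi
      simp only [h1, if_false]
      exact Finset.sum_nonneg (fun m _ => by split_ifs with h; exacts [hW m y, le_rfl])
    | some m0 =>
      have h1 : y ∈ (Rstar none)ᶜ := by
        simp only [Finset.mem_compl]
        intro hmem
        exact Option.some_ne_none m0 (hiu none hmem).symm
      have hVeq : V y = W m0 y :=
        le_antisymm (Finset.sup'_le _ _ (fun k _ => hRstarML m0 y hi k)) (hWleV m0 y)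
      have h0 : ∀ m : Fin M, m ≠ m0 → y ∉ Rstar (some m) := by
        intro m hm hmem
        exact hm (Option.some_injective _ (hiu (some m) hmem))
      have hsum : (∑ m, if y ∈ Rstar (some m) then W m y else 0) = W m0 y := by
        rw [Finset.sum_eq_single m0]
        · simp [hi]
        · intro m _ hm; simp [h0 m hm]
        · intro h; exact absurd (Finset.mem_univ m0) h
      rw [hsum]
      simp [h1, hVeq]
  -- Neyman–Pearson comparison: the starred rejection region captures less V-mass
  have hQcompl : ∀ (s : Finset Y), ∑ y ∈ sᶜ, Q0 y = 1 - ∑ y ∈ s, Q0 y := by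
    intro s
    have := Finset.sum_add_sum_compl s Q0
    rw [hQ0sum] at this
    linarith
  have hQle : ∑ y ∈ Rstar none, Q0 y ≤ ∑ y ∈ R none, Q0 y := by
    rw [hQcompl, hQcompl] at hFA
    linarith
  have hSle : ∑ y ∈ R none, (∑ m, W m y) ≤ ∑ y ∈ Rstar none, (∑ m, W m y) := by
    have h := (mul_le_mul_iff_right₀ (by positivity : (0:ℝ) < 1 / M)).mp hMD
    rw [Finset.sum_comm] at h
    rw [Finset.sum_comm (s := Finset.univ) (t := Rstar none)] at h
    exact h
  have hNP : ∑ y ∈ Rstar none, V y ≤ ∑ y ∈ R none, V y := by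
    have key2 : ∀ y : Y,
        (if y ∈ Rstar none then V y else 0) - (if y ∈ R none then V y else 0)
          ≤ (if y ∈ Rstar none then (b * Q0 y - a * ∑ m, W m y) else 0)
            - (if y ∈ R none then (b * Q0 y - a * ∑ m, W m y) else 0) := by
      intro y
      by_cases hs : y ∈ Rstar none <;> by_cases h : y ∈ R none <;>
        simp only [hs, h, if_true, if_false, sub_self, sub_zero, zero_sub, neg_le_neg_iff]
      · exact le_refl 0
      · have := (hRstar0 y).mp hs
        linarith
      · have hnot : ¬ (a * ∑ m, W m y + V y ≤ b * Q0 y) := fun hc => hs ((hRstar0 y).mpr hc)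
        push_neg at hnot
        linarith
      · exact le_refl 0
    have hsum := Finset.sum_le_sum (s := Finset.univ) (fun y _ => key2 y)
    rw [Finset.sum_sub_distrib, Finset.sum_sub_distrib] at hsum
    simp only [Finset.sum_ite_mem, Finset.univ_inter] at hsum
    have hg : ∑ y ∈ Rstar none, (b * Q0 y - a * ∑ m, W m y)
        - ∑ y ∈ R none, (b * Q0 y - a * ∑ m, W m y) ≤ 0 := by
      rw [Finset.sum_sub_distrib, Finset.sum_sub_distrib, ← Finset.mul_sum, ← Finset.mul_sum,
        ← Finset.mul_sum, ← Finset.mul_sum]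
      nlinarith [mul_nonneg hb (sub_nonneg.mpr hQle), mul_nonneg ha (sub_nonneg.mpr hSle)]
    linarith
  -- convert to complements
  have hVcompl : ∀ (s : Finset Y), ∑ y ∈ sᶜ, V y = (∑ y, V y) - ∑ y ∈ s, V y := by
    intro s
    have := Finset.sum_add_sum_compl s V
    linarith
  have hVcle : ∑ y ∈ (R none)ᶜ, V y ≤ ∑ y ∈ (Rstar none)ᶜ, V y := by
    rw [hVcompl, hVcompl]
    linarith
  -- chain of inequalities on the "correct decision" mass
  have hchain : ∑ m, ∑ y ∈ R (some m), W m y ≤ ∑ m, ∑ y ∈ Rstar (some m), W m y :=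
    le_trans (key R hRPart) (le_trans hVcle keyStar)
  -- finish: rewrite complements using total mass 1
  have hWcompl : ∀ (m : Fin M) (s : Finset Y), ∑ y ∈ sᶜ, W m y = 1 - ∑ y ∈ s, W m y := by
    intro m s
    have := Finset.sum_add_sum_compl s (W m)
    rw [hWsum m] at this
    linarith
  have h1 : ∑ m, ∑ y ∈ (Rstar (some m))ᶜ, W m y
      = (M:ℝ) - ∑ m, ∑ y ∈ Rstar (some m), W m y := by
    simp_rw [hWcompl]
    rw [Finset.sum_sub_distrib]
    simp
  have h2 : ∑ m, ∑ y ∈ (R (some m))ᶜ, W m y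
      = (M:ℝ) - ∑ m, ∑ y ∈ R (some m), W m y := by
    simp_rw [hWcompl]
    rw [Finset.sum_sub_distrib]
    simp
  rw [h1, h2]
  have : (0:ℝ) ≤ 1 / M := by positivity
  apply mul_le_mul_of_nonneg_left _ this
  linarith
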